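/- (Cancellation rule) Every closed upper set Z of Λ* satisfies: if yαz ∈ Z and yβz ∈ Z, where α, β ∈ Λ are incompatible letters (having no common lower bound in Λ) and y, z ∈ Λ*, then yz ∈ Z. -/
import Mathlib


/-- The Higman ordering on words over an ordered alphabet `Λ`:
`x ≤ y` iff `y` has a subword that is letterwise above `x`. -/
def HigmanLE {Λ : Type*} [PartialOrder Λ] (x y : List Λ) : Prop :=
  List.SublistForall₂ (· ≤ ·) x y

/-- The strict Higman ordering. -/
def HigmanLT {Λ : Type*} [PartialOrder Λ] (x y : List Λ) : Prop :=
  HigmanLE x y ∧ ¬ HigmanLE y x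

/-- The upper cone `X^Δ` of a set of words. -/
def upperCone {Λ : Type*} [PartialOrder Λ] (X : Set (List Λ)) : Set (List Λ) :=
  {y | ∀ x ∈ X, HigmanLE x y}

/-- The lower cone `X^∇` of a set of words. -/
def lowerCone {Λ : Type*} [PartialOrder Λ] (X : Set (List Λ)) : Set (List Λ) :=
  {y | ∀ x ∈ X, HigmanLE y x}

/-- Elementwise concatenation `XY` of two sets of words. -/
def concatSet {Λ : Type*} (X Y : Set (List Λ)) : Set (List Λ) :=
  {w | ∃ x ∈ X, ∃ y ∈ Y, w = x ++ y}

/-- A (MacNeille) closed upper set of words: `Z = Z^{∇Δ}`. -/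
def ClosedUpper {Λ : Type*} [PartialOrder Λ] (Z : Set (List Λ)) : Prop :=
  Z = upperCone (lowerCone Z)

/-- A (MacNeille) closed lower set of words: `W = W^{Δ∇}`. -/
def ClosedLower {Λ : Type*} [PartialOrder Λ] (W : Set (List Λ)) : Prop :=
  W = lowerCone (upperCone W)

/-- An upper set of words with respect to the Higman ordering. -/
def IsUpperWordSet {Λ : Type*} [PartialOrder Λ] (Z : Set (List Λ)) : Prop :=
  ∀ x y : List Λ, HigmanLE x y → x ∈ Z → y ∈ Z

/-- A finitely generated lower set of words. -/
def FinGenLowerWords {Λ : Type*} [PartialOrder Λ] (S : Set (List Λ)) : Prop :=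
  ∃ F : Finset (List Λ), S = {x | ∃ w ∈ F, HigmanLE x w}

/-- A finitely generated lower set of letters. -/
def FinGenLowerLetters {Λ : Type*} [PartialOrder Λ] (S : Set Λ) : Prop :=
  ∃ F : Finset Λ, S = {x | ∃ w ∈ F, x ≤ w}

/-- Well-foundedness: no infinite strictly decreasing sequence. -/
def NoInfiniteDescent {Λ : Type*} [PartialOrder Λ] : Prop :=
  ¬ ∃ f : ℕ → Λ, ∀ n, f (n + 1) < f n

/-- Stability under the cancellation rule. -/
def StableCancel {Λ : Type*} [PartialOrder Λ] (Z : Set (List Λ)) : Prop :=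
  ∀ (y z : List Λ) (α β : Λ), (¬ ∃ c, c ≤ α ∧ c ≤ β) →
    y ++ α :: z ∈ Z → y ++ β :: z ∈ Z → y ++ z ∈ Z

/-- Stability under the reduction rule. -/
def StableReduce {Λ : Type*} [PartialOrder Λ] (Z : Set (List Λ)) : Prop :=
  ∀ (y z : List Λ) (α γ : Λ), α < γ →
    y ++ α :: α :: z ∈ Z → y ++ γ :: z ∈ Z → y ++ α :: z ∈ Z

/-- Stability under the permutation rule. -/
def StablePerm {Λ : Type*} [PartialOrder Λ] (Z : Set (List Λ)) : Prop :=
  ∀ (y z : List Λ) (α β γ : Λ), ¬ α ≤ β → ¬ β ≤ α → α < γ → β < γ →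
    y ++ α :: β :: z ∈ Z → y ++ γ :: z ∈ Z → y ++ β :: α :: z ∈ Z

/-- Stability under the meet rule. -/
def StableMeet {Λ : Type*} [PartialOrder Λ] (Z : Set (List Λ)) : Prop :=
  ∀ (y z : List Λ) (α β m : Λ), ¬ α ≤ β → ¬ β ≤ α →
    IsGLB ({α, β} : Set Λ) m →
    y ++ α :: z ∈ Z → y ++ β :: z ∈ Z → y ++ m :: z ∈ Z

/-- Stability under all four rules. -/
def StableAll {Λ : Type*} [PartialOrder Λ] (Z : Set (List Λ)) : Prop :=
  StableCancel Z ∧ StableReduce Z ∧ StablePerm Z ∧ StableMeet Z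

/-- `[Y]`: the smallest upper set containing `Y` that is stable under the four rules. -/
def stableClosure {Λ : Type*} [PartialOrder Λ] (Y : Set (List Λ)) : Set (List Λ) :=
  ⋂₀ {Z : Set (List Λ) | Y ⊆ Z ∧ IsUpperWordSet Z ∧ StableAll Z}

section Aux
variable {L : Type*} [PartialOrder L]

lemma higman_append_left {x z : List L} (y : List L)
    (h : List.SublistForall₂ (· ≤ ·) x z) :
    List.SublistForall₂ (· ≤ ·) x (y ++ z) := by
  induction y with
  | nil => exact h
  | cons c y ih => exact List.SublistForall₂.cons_right ih

lemma higman_append {u v y z : List L}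
    (h1 : List.SublistForall₂ (· ≤ ·) u y)
    (h2 : List.SublistForall₂ (· ≤ ·) v z) :
    List.SublistForall₂ (· ≤ ·) (u ++ v) (y ++ z) := by
  induction h1 with
  | nil => exact higman_append_left _ h2
  | cons hab _ ih => exact List.SublistForall₂.cons hab ih
  | cons_right _ ih => exact List.SublistForall₂.cons_right ih

lemma higman_decomp {x z : List L} {al : L} :
    ∀ {y : List L}, List.SublistForall₂ (· ≤ ·) x (y ++ al :: z) →
    List.SublistForall₂ (· ≤ ·) x (y ++ z) ∨
    ∃ u a v, x = u ++ a :: v ∧ a ≤ al ∧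
      List.SublistForall₂ (· ≤ ·) u y ∧ List.SublistForall₂ (· ≤ ·) v z := by
  intro y
  induction y generalizing x with
  | nil =>
    intro h
    cases h with
    | nil => exact Or.inl List.SublistForall₂.nil
    | cons hab h' => exact Or.inr ⟨[], _, _, rfl, hab, List.SublistForall₂.nil, h'⟩
    | cons_right h' => exact Or.inl h'
  | cons c y ih =>
    intro h
    cases h with
    | nil => exact Or.inl List.SublistForall₂.nil
    | cons hab h' =>
      rcases ih h' with h'' | ⟨u, a, v, rfl, ha, hu, hv⟩
      · exact Or.inl (List.SublistForall₂.cons hab h'')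
      · exact Or.inr ⟨_ :: u, a, v, rfl, ha, List.SublistForall₂.cons hab hu, hv⟩
    | cons_right h' =>
      rcases ih h' with h'' | ⟨u, a, v, rfl, ha, hu, hv⟩
      · exact Or.inl (List.SublistForall₂.cons_right h'')
      · exact Or.inr ⟨u, a, v, rfl, ha, List.SublistForall₂.cons_right hu, hv⟩

lemma eq_middle_lt {u₁ u₂ v₁ v₂ : List L} {a b : L}
    (h : u₁ ++ a :: v₁ = u₂ ++ b :: v₂) (hlt : u₁.length < u₂.length) :
    ∃ w, v₁ = w ++ b :: v₂ := by
  induction u₁ generalizing u₂ with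
  | nil =>
    cases u₂ with
    | nil => simp at hlt
    | cons c u₂ => simp at h; exact ⟨u₂, h.2⟩
  | cons c u₁ ih =>
    cases u₂ with
    | nil => simp at hlt
    | cons d u₂ => simp at h hlt; exact ih h.2 hlt

end Aux


/-- cancellation rule: every closed upper set `Z` of `Λ*` satisfies:
if `yαz ∈ Z` and `yβz ∈ Z` with `α, β` incompatible letters, then `yz ∈ Z`. -/

theorem closedUpper_cancel {Λ : Type*} [PartialOrder Λ]
    (Z : Set (List Λ)) (hZ : ClosedUpper Z) : StableCancel Z := by
  intro y z α β hinc h1 h2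
  rw [hZ] at h1 h2 ⊢
  intro x hx
  have e1 := higman_decomp (h1 x hx)
  have e2 := higman_decomp (h2 x hx)
  rcases e1 with e1 | ⟨u₁, a, v₁, hx1, ha, hu₁, hv₁⟩
  · exact e1
  rcases e2 with e2 | ⟨u₂, b, v₂, hx2, hb, hu₂, hv₂⟩
  · exact e2
  have key : ∀ {u₁ u₂ : List Λ} {a b : Λ} {v₁ v₂ : List Λ},
      u₁ ++ a :: v₁ = u₂ ++ b :: v₂ → u₁.length < u₂.length →
      List.SublistForall₂ (· ≤ ·) u₂ y → List.SublistForall₂ (· ≤ ·) v₁ z →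
      List.SublistForall₂ (· ≤ ·) (u₂ ++ b :: v₂) (y ++ z) := by
    intro u₁ u₂ a b v₁ v₂ heq hlt hu hv
    obtain ⟨w, rfl⟩ := eq_middle_lt heq hlt
    have hs : List.SublistForall₂ (· ≤ ·) (b :: v₂) (w ++ b :: v₂) :=
      higman_append_left _ (refl_of (List.SublistForall₂ (· ≤ ·)) _)
    exact higman_append hu (trans_of (List.SublistForall₂ (· ≤ ·)) hs hv)
  rcases lt_trichotomy u₁.length u₂.length with hlt | heq | hlt
  · rw [hx2]; exact key (hx1 ▸ hx2) hlt hu₂ hv₁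
  · exfalso
    rw [hx1] at hx2
    obtain ⟨rfl, h⟩ := List.append_inj hx2 heq
    obtain ⟨rfl, -⟩ := List.cons.inj h
    exact hinc ⟨a, ha, hb⟩
  · rw [hx1]; exact key (hx2 ▸ hx1) hlt hu₁ hv₂
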